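/- Let E_1, …, E_m, F be Banach spaces, let 𝒞(E_1), …, 𝒞(E_m) be injective classes of linear operators on E_1, …, E_m respectively, let 𝒟(F) be a surjective class of linear operators on F, and let 𝒩 be an m-semi-ideal. Then the set 𝒟(F)∘𝒩∘(𝒞(E_1),…,𝒞(E_m)) of all continuous m-linear operators A : E_1 × ⋯ × E_m → F for which there exist Banach spaces G_0, G_1, …, G_m, linear operators S_i ∈ 𝒞(E_i, G_i) for i = 1,…,m, S_0 ∈ 𝒟(G_0, F), and an m-linear operator B ∈ 𝒩(G_1,…,G_m;G_0) with A = S_0 ∘ B ∘ (S_1,…,S_m), is a closed linear subspace of L(E_1,…,E_m;F). -/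

import Mathlib

open Filter Topology

universe u

/-- A bundled Banach space. -/
structure BanachSp : Type (u + 1) where
  carrier : Type u
  [nacg : NormedAddCommGroup carrier]
  [nsp : NormedSpace ℝ carrier]
  [cs : CompleteSpace carrier]

attribute [instance] BanachSp.nacg BanachSp.nsp BanachSp.cs

/-- An injective class of linear operators on a Banach space `E`: to each Banach space `G`
it assigns a closed linear subspace of `L(E,G)`, stable under composition with injective
operators on the left. -/
structure InjClass (E : Type u) [NormedAddCommGroup E] [NormedSpace ℝ E] [CompleteSpace E] :
    Type (u + 1) where
  mem : ∀ G : BanachSp.{u}, Set (E →L[ℝ] G.carrier)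
  isClosed : ∀ G, IsClosed (mem G)
  zero_mem : ∀ G, (0 : E →L[ℝ] G.carrier) ∈ mem G
  add_mem : ∀ G, ∀ f ∈ mem G, ∀ g ∈ mem G, f + g ∈ mem G
  smul_mem : ∀ (G) (c : ℝ), ∀ f ∈ mem G, c • f ∈ mem G
  comp_inj : ∀ (G H : BanachSp.{u}), ∀ T ∈ mem G, ∀ I : G.carrier →L[ℝ] H.carrier,
    Function.Injective I → I.comp T ∈ mem H

/-- A surjective class of linear operators into a Banach space `F`: to each Banach space `G`
it assigns a closed linear subspace of `L(G,F)`, stable under composition with surjective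
operators on the right. -/
structure SurjClass (F : Type u) [NormedAddCommGroup F] [NormedSpace ℝ F] [CompleteSpace F] :
    Type (u + 1) where
  mem : ∀ G : BanachSp.{u}, Set (G.carrier →L[ℝ] F)
  isClosed : ∀ G, IsClosed (mem G)
  zero_mem : ∀ G, (0 : G.carrier →L[ℝ] F) ∈ mem G
  add_mem : ∀ G, ∀ f ∈ mem G, ∀ g ∈ mem G, f + g ∈ mem G
  smul_mem : ∀ (G) (c : ℝ), ∀ f ∈ mem G, c • f ∈ mem G
  comp_surj : ∀ (G H : BanachSp.{u}), ∀ T ∈ mem G, ∀ P : H.carrier →L[ℝ] G.carrier,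
    Function.Surjective P → T.comp P ∈ mem H

/-- An `m`-semi-ideal: a class of continuous `m`-linear operators between Banach spaces whose
components are closed linear subspaces, stable under composition with surjective operators in
each variable and an injective operator on the left. -/
structure MSemiIdeal (m : ℕ) : Type (u + 1) where
  mem : ∀ (G : Fin m → BanachSp.{u}) (G₀ : BanachSp.{u}),
    Set (ContinuousMultilinearMap ℝ (fun i => (G i).carrier) G₀.carrier)
  isClosed : ∀ G G₀, IsClosed (mem G G₀)
  zero_mem : ∀ G G₀, 0 ∈ mem G G₀
  add_mem : ∀ G G₀, ∀ A ∈ mem G G₀, ∀ B ∈ mem G G₀, A + B ∈ mem G G₀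
  smul_mem : ∀ (G G₀) (c : ℝ), ∀ A ∈ mem G G₀, c • A ∈ mem G G₀
  comp_mem : ∀ (G : Fin m → BanachSp.{u}) (G₀ : BanachSp.{u}), ∀ A ∈ mem G G₀,
    ∀ (H : Fin m → BanachSp.{u}) (H₀ : BanachSp.{u})
      (uu : ∀ i, (H i).carrier →L[ℝ] (G i).carrier), (∀ i, Function.Surjective (uu i)) →
      ∀ t : G₀.carrier →L[ℝ] H₀.carrier, Function.Injective t →
        t.compContinuousMultilinearMap (A.compContinuousLinearMap uu) ∈ mem H H₀

/-- The set of `m`-linear operators `A : E₁ × ⋯ × E_m → F` factoring as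
`A = S₀ ∘ B ∘ (S₁,…,S_m)` with `S_i` in the injective class `C i`, `B` in the `m`-semi-ideal
`N` and `S₀` in the surjective class `D`. -/
def FactorableOperators {m : ℕ} (E : Fin m → BanachSp.{u}) (F : BanachSp.{u})
    (C : ∀ i, InjClass.{u} (E i).carrier) (D : SurjClass.{u} F.carrier)
    (N : MSemiIdeal.{u} m) :
    Set (ContinuousMultilinearMap ℝ (fun i => (E i).carrier) F.carrier) :=
  {A | ∃ (G₀ : BanachSp.{u}) (G : Fin m → BanachSp.{u})
      (S₀ : G₀.carrier →L[ℝ] F.carrier) (S : ∀ i, (E i).carrier →L[ℝ] (G i).carrier)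
      (B : ContinuousMultilinearMap ℝ (fun i => (G i).carrier) G₀.carrier),
      S₀ ∈ D.mem G₀ ∧ (∀ i, S i ∈ (C i).mem (G i)) ∧ B ∈ N.mem G G₀ ∧
      ∀ x : ∀ i, (E i).carrier, A x = S₀ (B fun i => S i (x i))}


section Aux

/-- shell trick: a bound on unit vectors gives an operator norm bound. -/
theorem opNorm_le_of_unit {ι : Type*} [Fintype ι] {X : ι → Type*} {Y : Type*}
    [∀ i, NormedAddCommGroup (X i)] [∀ i, NormedSpace ℝ (X i)]
    [NormedAddCommGroup Y] [NormedSpace ℝ Y]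
    (f : ContinuousMultilinearMap ℝ X Y) {Cb : ℝ} (hC : 0 ≤ Cb)
    (h : ∀ x : ∀ i, X i, (∀ i, ‖x i‖ ≤ 1) → ‖f x‖ ≤ Cb) : ‖f‖ ≤ Cb := by
  refine ContinuousMultilinearMap.opNorm_le_bound hC (fun x => ?_)
  by_cases hz : ∃ i, x i = 0
  · obtain ⟨i, hi⟩ := hz
    rw [f.map_coord_zero i hi]
    simp only [norm_zero]
    positivity
  · push_neg at hz
    have hxpos : ∀ i, 0 < ‖x i‖ := fun i => norm_pos_iff.mpr (hz i)
    set u : ∀ i, X i := fun i => (‖x i‖)⁻¹ • x i with hu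
    have hx : x = fun i => (‖x i‖ : ℝ) • u i := by
      funext i
      simp [hu, smul_smul, mul_inv_cancel₀ (ne_of_gt (hxpos i))]
    have : f x = (∏ i, ‖x i‖) • f u := by
      conv_lhs => rw [hx]
      exact f.map_smul_univ _ u
    rw [this, norm_smul]
    have hun : ∀ i, ‖u i‖ ≤ 1 := by
      intro i
      simp only [hu, norm_smul, norm_inv, norm_norm]
      rw [inv_mul_cancel₀ (ne_of_gt (hxpos i))]
    have h1 : ‖f u‖ ≤ Cb := h u hun
    have h2 : ‖(∏ i, ‖x i‖ : ℝ)‖ = ∏ i, ‖x i‖ := by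
      rw [Real.norm_eq_abs, abs_of_nonneg]
      positivity
    rw [h2, mul_comm]
    exact mul_le_mul h1 le_rfl (by positivity) hC

/-- geometric convergence to a limit. -/
theorem tendsto_of_geom {V : Type*} [SeminormedAddCommGroup V] (L : V) (P : ℕ → V) (c : ℝ)
    (h : ∀ n, ‖L - P n‖ ≤ c * (1/2 : ℝ)^n) : Tendsto P atTop (𝓝 L) := by
  rw [tendsto_iff_norm_sub_tendsto_zero]
  have hb : Tendsto (fun n : ℕ => c * (1/2 : ℝ)^n) atTop (𝓝 0) := by
    have : Tendsto (fun n : ℕ => (1/2 : ℝ)^n) atTop (𝓝 0) :=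
      tendsto_pow_atTop_nhds_zero_of_lt_one (by norm_num) (by norm_num)
    simpa using this.const_mul c
  refine squeeze_zero (g := fun n : ℕ => c * (1/2 : ℝ)^n) (fun n => norm_nonneg _)
    (fun n => ?_) hb
  rw [norm_sub_rev]; exact h n

variable {m : ℕ} {E : Fin m → BanachSp.{u}} {F : BanachSp.{u}}
    {C : ∀ i, InjClass.{u} (E i).carrier} {D : SurjClass.{u} F.carrier} {N : MSemiIdeal.{u} m}

theorem factorable_zero :
    (0 : ContinuousMultilinearMap ℝ (fun i => (E i).carrier) F.carrier) ∈
      FactorableOperators E F C D N := by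
  refine ⟨F, E, 0, fun i => 0, 0, D.zero_mem F, fun i => (C i).zero_mem (E i),
    N.zero_mem E F, fun x => ?_⟩
  simp

theorem factorable_smul (c : ℝ) (A : ContinuousMultilinearMap ℝ (fun i => (E i).carrier) F.carrier)
    (hA : A ∈ FactorableOperators E F C D N) :
    c • A ∈ FactorableOperators E F C D N := by
  obtain ⟨G₀, G, S₀, S, B, h₀, hS, hB, heq⟩ := hA
  refine ⟨G₀, G, S₀, S, c • B, h₀, hS, N.smul_mem G G₀ c B hB, fun x => ?_⟩
  simp only [ContinuousMultilinearMap.smul_apply, heq x, map_smul]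

theorem factorable_add (A₁ A₂ : ContinuousMultilinearMap ℝ (fun i => (E i).carrier) F.carrier)
    (h₁ : A₁ ∈ FactorableOperators E F C D N) (h₂ : A₂ ∈ FactorableOperators E F C D N) :
    A₁ + A₂ ∈ FactorableOperators E F C D N := by
  obtain ⟨G₀, G, S₀, S, B, hm₀, hmS, hmB, heq⟩ := h₁
  obtain ⟨G₀', G', S₀', S', B', hm₀', hmS', hmB', heq'⟩ := h₂
  let K₀ : BanachSp.{u} := ⟨G₀.carrier × G₀'.carrier⟩
  let K : Fin m → BanachSp.{u} := fun i => ⟨(G i).carrier × (G' i).carrier⟩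
  let f₀ : K₀.carrier →L[ℝ] G₀.carrier := ContinuousLinearMap.fst ℝ G₀.carrier G₀'.carrier
  let g₀ : K₀.carrier →L[ℝ] G₀'.carrier := ContinuousLinearMap.snd ℝ G₀.carrier G₀'.carrier
  let fK : ∀ i, (K i).carrier →L[ℝ] (G i).carrier :=
    fun i => ContinuousLinearMap.fst ℝ (G i).carrier (G' i).carrier
  let gK : ∀ i, (K i).carrier →L[ℝ] (G' i).carrier :=
    fun i => ContinuousLinearMap.snd ℝ (G i).carrier (G' i).carrier
  let j₀ : ∀ i, (G i).carrier →L[ℝ] (K i).carrier :=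
    fun i => ContinuousLinearMap.inl ℝ (G i).carrier (G' i).carrier
  let j₁ : ∀ i, (G' i).carrier →L[ℝ] (K i).carrier :=
    fun i => ContinuousLinearMap.inr ℝ (G i).carrier (G' i).carrier
  let l₀ : G₀.carrier →L[ℝ] K₀.carrier := ContinuousLinearMap.inl ℝ G₀.carrier G₀'.carrier
  let l₁ : G₀'.carrier →L[ℝ] K₀.carrier := ContinuousLinearMap.inr ℝ G₀.carrier G₀'.carrier
  have hj₀ : ∀ i, Function.Injective (j₀ i) := by
    intro i a b hab
    exact congrArg Prod.fst hab
  have hj₁ : ∀ i, Function.Injective (j₁ i) := by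
    intro i a b hab
    exact congrArg Prod.snd hab
  have hl₀ : Function.Injective l₀ := by intro a b hab; exact congrArg Prod.fst hab
  have hl₁ : Function.Injective l₁ := by intro a b hab; exact congrArg Prod.snd hab
  have hf₀ : Function.Surjective f₀ := Prod.fst_surjective
  have hg₀ : Function.Surjective g₀ := Prod.snd_surjective
  have hfK : ∀ i, Function.Surjective (fK i) := fun i => Prod.fst_surjective
  have hgK : ∀ i, Function.Surjective (gK i) := fun i => Prod.snd_surjective
  refine ⟨K₀, K, S₀.comp f₀ + S₀'.comp g₀,
    fun i => (j₀ i).comp (S i) + (j₁ i).comp (S' i),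
    l₀.compContinuousMultilinearMap (B.compContinuousLinearMap fK) +
      l₁.compContinuousMultilinearMap (B'.compContinuousLinearMap gK),
    ?_, ?_, ?_, ?_⟩
  · exact D.add_mem K₀ _ (D.comp_surj G₀ K₀ S₀ hm₀ f₀ hf₀)
      _ (D.comp_surj G₀' K₀ S₀' hm₀' g₀ hg₀)
  · intro i
    exact (C i).add_mem (K i) _ ((C i).comp_inj (G i) (K i) (S i) (hmS i) (j₀ i) (hj₀ i))
      _ ((C i).comp_inj (G' i) (K i) (S' i) (hmS' i) (j₁ i) (hj₁ i))
  · exact N.add_mem K K₀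
      _ (N.comp_mem G G₀ B hmB K K₀ fK hfK l₀ hl₀)
      _ (N.comp_mem G' G₀' B' hmB' K K₀ gK hgK l₁ hl₁)
  · intro x
    simp only [ContinuousMultilinearMap.add_apply, ContinuousLinearMap.add_apply,
      ContinuousLinearMap.comp_apply, ContinuousLinearMap.compContinuousMultilinearMap_coe,
      Function.comp_apply, ContinuousMultilinearMap.compContinuousLinearMap_apply, map_add]
    rw [heq x, heq' x]
    have e1 : ∀ i (a : (G i).carrier), fK i (j₀ i a) = a := fun i a => rfl
    have e2 : ∀ i (a : (G' i).carrier), fK i (j₁ i a) = 0 := fun i a => rfl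
    have e3 : ∀ i (a : (G i).carrier), gK i (j₀ i a) = 0 := fun i a => rfl
    have e4 : ∀ i (a : (G' i).carrier), gK i (j₁ i a) = a := fun i a => rfl
    have e5 : ∀ a : G₀.carrier, f₀ (l₀ a) = a := fun a => rfl
    have e6 : ∀ a : G₀'.carrier, f₀ (l₁ a) = 0 := fun a => rfl
    have e7 : ∀ a : G₀.carrier, g₀ (l₀ a) = 0 := fun a => rfl
    have e8 : ∀ a : G₀'.carrier, g₀ (l₁ a) = a := fun a => rfl
    simp only [e1, e2, e3, e4, e5, e6, e7, e8, add_zero, zero_add, map_zero]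

theorem factorable_sub (A₁ A₂ : ContinuousMultilinearMap ℝ (fun i => (E i).carrier) F.carrier)
    (h₁ : A₁ ∈ FactorableOperators E F C D N) (h₂ : A₂ ∈ FactorableOperators E F C D N) :
    A₁ - A₂ ∈ FactorableOperators E F C D N := by
  have := factorable_add A₁ ((-1 : ℝ) • A₂) h₁ (factorable_smul (-1) A₂ h₂)
  simpa [sub_eq_add_neg] using this

/-- C-side renorming: replace the target by a quotient of `E × G` so that the factor through
the injective class has norm ≤ 1 and the unit ball of the new space is almost
`S(Ball) + θ·Ball`. -/
theorem inj_renorm {Ei : Type u} [NormedAddCommGroup Ei] [NormedSpace ℝ Ei] [CompleteSpace Ei]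
    (Cc : InjClass.{u} Ei) (Gi : BanachSp.{u}) (Si : Ei →L[ℝ] Gi.carrier)
    (hSi : Si ∈ Cc.mem Gi) {θ : ℝ} (hθ0 : 0 < θ) :
    ∃ (Hi : BanachSp.{u}) (Sh : Ei →L[ℝ] Hi.carrier) (φ : Hi.carrier →L[ℝ] Gi.carrier),
      Sh ∈ Cc.mem Hi ∧ Function.Surjective φ ∧ (∀ e, φ (Sh e) = Si e) ∧
      (∀ e, ‖Sh e‖ ≤ ‖e‖) ∧ (∀ h, ‖φ h‖ ≤ (‖Si‖ + θ) * ‖h‖) ∧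
      (∀ (h : Hi.carrier) (ε : ℝ), 0 < ε → ∃ (e : Ei) (r : Gi.carrier),
          φ h = Si e + θ • r ∧ ‖e‖ ≤ ‖h‖ + ε ∧ ‖r‖ ≤ ‖h‖ + ε) := by
  classical
  set P := Ei × Gi.carrier with hP
  let q : P →L[ℝ] Gi.carrier :=
    Si.comp (ContinuousLinearMap.fst ℝ Ei Gi.carrier) +
      θ • ContinuousLinearMap.snd ℝ Ei Gi.carrier
  have hqap : ∀ v : P, q v = Si v.1 + θ • v.2 := by
    intro v
    rfl
  have hqb : ∀ v : P, ‖q v‖ ≤ (‖Si‖ + θ) * ‖v‖ := by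
    intro v
    rw [hqap]
    calc ‖Si v.1 + θ • v.2‖ ≤ ‖Si v.1‖ + ‖θ • v.2‖ := norm_add_le _ _
    _ ≤ ‖Si‖ * ‖v.1‖ + θ * ‖v.2‖ := by
        gcongr
        · exact Si.le_opNorm v.1
        · rw [norm_smul, Real.norm_eq_abs, abs_of_pos hθ0]
    _ ≤ ‖Si‖ * ‖v‖ + θ * ‖v‖ :=
        add_le_add (mul_le_mul_of_nonneg_left (norm_fst_le v) (norm_nonneg _))
          (mul_le_mul_of_nonneg_left (norm_snd_le v) (le_of_lt hθ0))
    _ = (‖Si‖ + θ) * ‖v‖ := by ring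
  have hqsurj : Function.Surjective q := by
    intro g
    refine ⟨(0, θ⁻¹ • g), ?_⟩
    rw [hqap]
    simp [smul_smul, mul_inv_cancel₀ hθ0.ne']
  set K : Submodule ℝ P := LinearMap.ker (q : P →ₗ[ℝ] Gi.carrier) with hK
  have hKcl : IsClosed (K : Set P) := ContinuousLinearMap.isClosed_ker q
  letI : NormedAddCommGroup (P ⧸ K) := Submodule.Quotient.normedAddCommGroup K
  letI : NormedSpace ℝ (P ⧸ K) := Submodule.Quotient.normedSpace K ℝ
  letI : CompleteSpace (P ⧸ K) := Submodule.Quotient.completeSpace K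
  let lq : P ⧸ K →ₗ[ℝ] Gi.carrier := K.liftQ (q : P →ₗ[ℝ] Gi.carrier) le_rfl
  have hlq_mk : ∀ v : P, lq (Submodule.Quotient.mk v) = q v := fun v => rfl
  have hCq : 0 < ‖Si‖ + θ := by positivity
  have hbound : ∀ z : P ⧸ K, ‖lq z‖ ≤ (‖Si‖ + θ) * ‖z‖ := by
    intro z
    refine le_of_forall_pos_le_add (fun ε hε => ?_)
    obtain ⟨v, hv, hvn⟩ := Submodule.Quotient.norm_mk_lt z (div_pos hε hCq)
    have : ‖lq z‖ = ‖q v‖ := by rw [← hv, hlq_mk]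
    rw [this]
    calc ‖q v‖ ≤ (‖Si‖ + θ) * ‖v‖ := hqb v
    _ ≤ (‖Si‖ + θ) * (‖z‖ + ε / (‖Si‖ + θ)) :=
          mul_le_mul_of_nonneg_left (le_of_lt hvn) (le_of_lt hCq)
    _ = (‖Si‖ + θ) * ‖z‖ + ε := by
          rw [mul_add]
          congr 1
          field_simp
  let φ : P ⧸ K →L[ℝ] Gi.carrier := LinearMap.mkContinuous lq ((‖Si‖ + θ)) hbound
  have hφ_mk : ∀ v : P, φ (Submodule.Quotient.mk v) = q v := fun v => rfl
  have hφsurj : Function.Surjective φ := by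
    intro g
    obtain ⟨v, hv⟩ := hqsurj g
    exact ⟨Submodule.Quotient.mk v, by rw [hφ_mk, hv]⟩
  have hφinj : Function.Injective φ := by
    intro a b hab
    obtain ⟨va, rfl⟩ := Submodule.Quotient.mk_surjective K a
    obtain ⟨vb, rfl⟩ := Submodule.Quotient.mk_surjective K b
    rw [hφ_mk, hφ_mk] at hab
    rw [Submodule.Quotient.eq]
    exact LinearMap.mem_ker.mpr (by rw [map_sub]; exact sub_eq_zero.mpr hab)
  let Hi : BanachSp.{u} := ⟨P ⧸ K⟩
  let eφ : Hi.carrier ≃L[ℝ] Gi.carrier :=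
    ContinuousLinearEquiv.ofBijective φ (LinearMap.ker_eq_bot.mpr hφinj)
      (LinearMap.range_eq_top.mpr hφsurj)
  have heφ : ∀ z, eφ z = φ z := fun z => rfl
  let Sh : Ei →L[ℝ] Hi.carrier := (eφ.symm : Gi.carrier →L[ℝ] Hi.carrier).comp Si
  have hShmk : ∀ e, Sh e = Submodule.Quotient.mk ((e, 0) : P) := by
    intro e
    apply hφinj
    have h1 : φ (Sh e) = Si e := by
      show φ (eφ.symm (Si e)) = Si e
      rw [← heφ]
      exact eφ.apply_symm_apply (Si e)
    rw [h1, hφ_mk, hqap]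
    simp
  refine ⟨Hi, Sh, φ, ?_, hφsurj, ?_, ?_, ?_, ?_⟩
  · exact Cc.comp_inj Gi Hi Si hSi (eφ.symm : Gi.carrier →L[ℝ] Hi.carrier) eφ.symm.injective
  · intro e
    show φ (eφ.symm (Si e)) = Si e
    rw [← heφ]
    exact eφ.apply_symm_apply (Si e)
  · intro e
    rw [hShmk e]
    calc ‖Submodule.Quotient.mk ((e, 0) : P)‖ ≤ ‖((e, 0) : P)‖ :=
          Submodule.Quotient.norm_mk_le K _
    _ = ‖e‖ := by
        rw [Prod.norm_def]
        simp [max_eq_left (norm_nonneg e)]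
  · exact hbound
  · intro h ε hε
    obtain ⟨v, hv, hvn⟩ := Submodule.Quotient.norm_mk_lt h hε
    refine ⟨v.1, v.2, ?_, ?_, ?_⟩
    · rw [← hv, hφ_mk, hqap]
    · exact le_trans (norm_fst_le v) (le_of_lt hvn)
    · exact le_trans (norm_snd_le v) (le_of_lt hvn)

/-- D-side renorming: replace the source by the graph `{(τy, S₀y)}` so that the factor in the
surjective class has norm ≤ 1 while the embedding norm sees only `τ‖·‖ + ‖S₀·‖`. -/
theorem surj_renorm {Ff : Type u} [NormedAddCommGroup Ff] [NormedSpace ℝ Ff] [CompleteSpace Ff]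
    (Dd : SurjClass.{u} Ff) (G₀ : BanachSp.{u}) (S₀ : G₀.carrier →L[ℝ] Ff)
    (h₀ : S₀ ∈ Dd.mem G₀) {τ : ℝ} (hτ0 : 0 < τ) :
    ∃ (Y : BanachSp.{u}) (Sy : Y.carrier →L[ℝ] Ff) (jy : G₀.carrier →L[ℝ] Y.carrier),
      Sy ∈ Dd.mem Y ∧ Function.Injective jy ∧ (∀ g, Sy (jy g) = S₀ g) ∧
      (∀ y, ‖Sy y‖ ≤ ‖y‖) ∧ (∀ g, ‖jy g‖ ≤ τ * ‖g‖ + ‖S₀ g‖) := by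
  classical
  let j : G₀.carrier →L[ℝ] G₀.carrier × Ff :=
    (τ • ContinuousLinearMap.id ℝ G₀.carrier).prod S₀
  have hjap : ∀ g, j g = (τ • g, S₀ g) := fun g => rfl
  have hjlow : ∀ g, ‖g‖ ≤ τ⁻¹ * ‖j g‖ := by
    intro g
    rw [hjap]
    have h1 : τ * ‖g‖ ≤ ‖((τ • g, S₀ g) : G₀.carrier × Ff)‖ := by
      rw [Prod.norm_def]
      refine le_trans ?_ (le_max_left _ _)
      rw [norm_smul, Real.norm_eq_abs, abs_of_pos hτ0]
    rw [le_inv_mul_iff₀ hτ0]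
    exact h1
  have hjanti : AntilipschitzWith (⟨τ⁻¹, le_of_lt (inv_pos.mpr hτ0)⟩ : NNReal) j :=
    j.antilipschitz_of_bound (fun g => hjlow g)
  have hjinj : Function.Injective j := hjanti.injective
  set Rng : Submodule ℝ (G₀.carrier × Ff) := LinearMap.range (j : G₀.carrier →ₗ[ℝ] _) with hR
  have hRcl : IsClosed (Rng : Set (G₀.carrier × Ff)) := by
    have := hjanti.isClosed_range j.uniformContinuous
    rw [show (Rng : Set (G₀.carrier × Ff)) = Set.range j from
      Set.ext fun _ => LinearMap.mem_range (f := (j : G₀.carrier →ₗ[ℝ] G₀.carrier × Ff))]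
    exact this
  letI : CompleteSpace Rng := hRcl.completeSpace_coe
  let Y : BanachSp.{u} := ⟨Rng⟩
  let jy : G₀.carrier →L[ℝ] Y.carrier :=
    j.codRestrict Rng (fun g => LinearMap.mem_range_self _ g)
  have hjyinj : Function.Injective jy := by
    intro a b hab
    apply hjinj
    have : (jy a : G₀.carrier × Ff) = (jy b : G₀.carrier × Ff) := by rw [hab]
    exact this
  have hjysurj : Function.Surjective jy := by
    rintro ⟨y, g, rfl⟩
    exact ⟨g, rfl⟩
  let ej : G₀.carrier ≃L[ℝ] Y.carrier :=
    ContinuousLinearEquiv.ofBijective jy (LinearMap.ker_eq_bot.mpr hjyinj)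
      (LinearMap.range_eq_top.mpr hjysurj)
  let Sy : Y.carrier →L[ℝ] Ff := (ContinuousLinearMap.snd ℝ G₀.carrier Ff).comp Rng.subtypeL
  have hSyap : ∀ y : Y.carrier, Sy y = (y : G₀.carrier × Ff).2 := fun y => rfl
  have hSyj : ∀ g, Sy (jy g) = S₀ g := by
    intro g
    rw [hSyap]
    rfl
  have hSyej : Sy = S₀.comp (ej.symm : Y.carrier →L[ℝ] G₀.carrier) := by
    ext y
    obtain ⟨g, rfl⟩ := ej.surjective y
    have h1 : ej.symm (ej g) = g := ej.symm_apply_apply g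
    rw [ContinuousLinearMap.comp_apply]
    show Sy (ej g) = S₀ (ej.symm (ej g))
    rw [h1]
    have : ej g = jy g := rfl
    rw [this, hSyj]
  refine ⟨Y, Sy, jy, ?_, hjyinj, hSyj, ?_, ?_⟩
  · rw [hSyej]
    exact Dd.comp_surj G₀ Y S₀ h₀ (ej.symm : Y.carrier →L[ℝ] G₀.carrier) ej.symm.surjective
  · intro y
    rw [hSyap]
    calc ‖(y : G₀.carrier × Ff).2‖ ≤ ‖(y : G₀.carrier × Ff)‖ := norm_snd_le _
    _ = ‖y‖ := rfl
  · intro g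
    have : ‖jy g‖ = ‖j g‖ := rfl
    rw [this, hjap, Prod.norm_def]
    have h1 : ‖τ • g‖ = τ * ‖g‖ := by
      rw [norm_smul, Real.norm_eq_abs, abs_of_pos hτ0]
    rw [h1]
    exact max_le (by nlinarith [norm_nonneg (S₀ g)]) (by nlinarith [norm_nonneg g])


theorem pow_one_add_le (n : ℕ) {ε : ℝ} (h0 : 0 ≤ ε) (h1 : ε ≤ 1) :
    (1 + ε) ^ n ≤ 1 + 3 ^ n * ε := by
  induction n with
  | zero => simpa using h0
  | succ n ih =>
    have h3 : (0:ℝ) < 3 ^ n := by positivity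
    calc (1 + ε) ^ (n + 1) = (1 + ε) ^ n * (1 + ε) := by ring
    _ ≤ (1 + 3 ^ n * ε) * (1 + ε) := by
        apply mul_le_mul_of_nonneg_right ih
        positivity
    _ = 1 + (1 + 3 ^ n + 3 ^ n * ε) * ε := by ring
    _ ≤ 1 + 3 ^ (n + 1) * ε := by
        have : (1 + 3 ^ n + 3 ^ n * ε) ≤ 3 ^ (n+1) := by
          have h2 : (1:ℝ) ≤ 3 ^ n := one_le_pow₀ (by norm_num)
          have h4 : 3 ^ n * ε ≤ 3 ^ n := by nlinarith
          calc 1 + 3 ^ n + 3 ^ n * ε ≤ 3 ^ n + 3 ^ n + 3 ^ n := by nlinarith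
          _ = 3 ^ (n+1) := by ring
        nlinarith

set_option maxHeartbeats 2000000 in
theorem ctrl1 (A : ContinuousMultilinearMap ℝ (fun i => (E i).carrier) F.carrier)
    (hA : A ∈ FactorableOperators E F C D N) {δ : ℝ} (hδ : 0 < δ) :
    ∃ (G₀ : BanachSp.{u}) (G : Fin m → BanachSp.{u})
      (S₀ : G₀.carrier →L[ℝ] F.carrier) (S : ∀ i, (E i).carrier →L[ℝ] (G i).carrier)
      (B : ContinuousMultilinearMap ℝ (fun i => (G i).carrier) G₀.carrier),
      S₀ ∈ D.mem G₀ ∧ (∀ i, S i ∈ (C i).mem (G i)) ∧ B ∈ N.mem G G₀ ∧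
      (∀ x, A x = S₀ (B fun i => S i (x i))) ∧
      ‖S₀‖ ≤ 1 ∧ (∀ i, ‖S i‖ ≤ 1) ∧ ‖B‖ ≤ ‖A‖ + δ := by
  classical
  obtain ⟨G₀, G, S₀, S, B, hm₀, hmS, hmB, heq⟩ := hA
  set M : ContinuousMultilinearMap ℝ (fun i => (G i).carrier) F.carrier :=
    S₀.compContinuousMultilinearMap B with hM
  set K₁ : ℝ := 1 + ∑ i, ‖S i‖ with hK₁
  have hSnn : (0:ℝ) ≤ ∑ i, ‖S i‖ := Finset.sum_nonneg (fun i _ => norm_nonneg _)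
  have hK₁1 : (1:ℝ) ≤ K₁ := by rw [hK₁]; linarith
  have hK₁0 : (0:ℝ) < K₁ := lt_of_lt_of_le one_pos hK₁1
  have hK₁S : ∀ i, ‖S i‖ ≤ K₁ := by
    intro i
    rw [hK₁]
    have : ‖S i‖ ≤ ∑ j, ‖S j‖ :=
      Finset.single_le_sum (fun j _ => norm_nonneg (S j)) (Finset.mem_univ i)
    linarith
  set X : ℝ := ‖M‖ * m * (2*K₁)^(m-1) with hX
  have hX0 : 0 ≤ X := by positivity
  set θ : ℝ := min 1 (δ / (8 * (1 + X))) with hθ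
  have hθ0 : 0 < θ := lt_min one_pos (by positivity)
  have hθ1 : θ ≤ 1 := min_le_left _ _
  have hθX : X * (2*θ) ≤ δ/4 := by
    have h1 : θ ≤ δ / (8 * (1 + X)) := min_le_right _ _
    have h2 : 0 < 8 * (1 + X) := by positivity
    rw [le_div_iff₀ h2] at h1
    nlinarith
  set τ : ℝ := min 1 (δ / (4 * (1 + ‖B‖ * (2*K₁)^m))) with hτ
  have hBK : (0:ℝ) ≤ ‖B‖ * (2*K₁)^m := by positivity
  have hτ0 : 0 < τ := lt_min one_pos (by positivity)
  have hτB : τ * (‖B‖ * (2*K₁)^m) ≤ δ/4 := by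
    have h1 : τ ≤ δ / (4 * (1 + ‖B‖ * (2*K₁)^m)) := min_le_right _ _
    have h2 : 0 < 4 * (1 + ‖B‖ * (2*K₁)^m) := by positivity
    rw [le_div_iff₀ h2] at h1
    nlinarith
  choose Hi Sh φ hShmem hφsurj hφSh hShn hφn hdecomp using
      fun i => inj_renorm (C i) (G i) (S i) (hmS i) hθ0
  obtain ⟨Y, Sy, jy, hSymem, hjyinj, hSyj, hSyn, hjyn⟩ := surj_renorm D G₀ S₀ hm₀ hτ0
  set Bn : ContinuousMultilinearMap ℝ (fun i => (Hi i).carrier) Y.carrier :=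
    jy.compContinuousMultilinearMap (B.compContinuousLinearMap φ) with hBn
  have hBnmem : Bn ∈ N.mem Hi Y := N.comp_mem G G₀ B hmB Hi Y φ hφsurj jy hjyinj
  have hBnap : ∀ h : ∀ i, (Hi i).carrier, Bn h = jy (B (fun i => φ i (h i))) := fun h => rfl
  have hid : ∀ x : ∀ i, (E i).carrier, A x = Sy (Bn fun i => Sh i (x i)) := by
    intro x
    rw [hBnap, hSyj]
    have : (fun i => φ i (Sh i (x i))) = fun i => S i (x i) := funext (fun i => hφSh i (x i))
    rw [this, heq x]
  -- core estimate on the unit ball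
  have hcore : ∀ h : ∀ i, (Hi i).carrier, (∀ i, ‖h i‖ ≤ 1) → ‖Bn h‖ ≤ ‖A‖ + δ := by
    intro h hh
    set z : G₀.carrier := B (fun i => φ i (h i)) with hz
    have hBnz : ‖Bn h‖ ≤ τ * ‖z‖ + ‖S₀ z‖ := by
      rw [hBnap]
      exact hjyn z
    have hφh : ∀ i, ‖φ i (h i)‖ ≤ 2*K₁ := by
      intro i
      calc ‖φ i (h i)‖ ≤ (‖S i‖ + θ) * ‖h i‖ := hφn i (h i)
      _ ≤ (K₁ + 1) * 1 := by
          apply mul_le_mul (by linarith [hK₁S i]) (hh i) (norm_nonneg _) (by linarith)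
      _ ≤ 2*K₁ := by linarith
    have hzn : ‖z‖ ≤ ‖B‖ * (2*K₁)^m := by
      rw [hz]
      calc ‖B (fun i => φ i (h i))‖ ≤ ‖B‖ * ∏ i, ‖φ i (h i)‖ := B.le_opNorm _
      _ ≤ ‖B‖ * (2*K₁)^m := by
          apply mul_le_mul_of_nonneg_left _ (norm_nonneg B)
          calc ∏ i, ‖φ i (h i)‖ ≤ ∏ i : Fin m, (2*K₁) :=
                Finset.prod_le_prod (fun i _ => norm_nonneg _) (fun i _ => hφh i)
          _ = (2*K₁)^m := by
              rw [Finset.prod_const, Finset.card_univ, Fintype.card_fin]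
    have hτz : τ * ‖z‖ ≤ δ/4 := by
      calc τ * ‖z‖ ≤ τ * (‖B‖ * (2*K₁)^m) := by
            apply mul_le_mul_of_nonneg_left hzn (le_of_lt hτ0)
      _ ≤ δ/4 := hτB
    -- the S₀ z part, with ε-decompositions
    have hS₀z : ∀ ε : ℝ, 0 < ε → ε ≤ 1 → ‖S₀ z‖ ≤ ‖A‖ * (1+ε)^m + δ/4 := by
      intro ε hε hε1
      choose e r hdec hre hrr using fun i => hdecomp i (h i) ε hε
      set m₁ : ∀ i, (G i).carrier := fun i => φ i (h i) with hm₁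
      set m₂ : ∀ i, (G i).carrier := fun i => S i (e i) with hm₂
      have he2 : ∀ i, ‖e i‖ ≤ 1 + ε := fun i => le_trans (hre i) (by linarith [hh i])
      have hr2 : ∀ i, ‖r i‖ ≤ 2 := fun i => le_trans (hrr i) (by linarith [hh i])
      have hMz : S₀ z = M m₁ := rfl
      have hm₁n : ‖m₁‖ ≤ 2*K₁ := by
        apply pi_norm_le_iff_of_nonneg (by positivity) |>.mpr
        intro i
        exact hφh i
      have hm₂n : ‖m₂‖ ≤ 2*K₁ := by
        apply pi_norm_le_iff_of_nonneg (by positivity) |>.mpr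
        intro i
        calc ‖S i (e i)‖ ≤ ‖S i‖ * ‖e i‖ := (S i).le_opNorm _
        _ ≤ K₁ * 2 := by
            apply mul_le_mul (hK₁S i) (by linarith [he2 i]) (norm_nonneg _) (le_of_lt hK₁0)
        _ = 2*K₁ := by ring
      have hdiffn : ‖m₁ - m₂‖ ≤ θ * 2 := by
        apply pi_norm_le_iff_of_nonneg (by positivity) |>.mpr
        intro i
        have : (m₁ - m₂) i = θ • r i := by
          rw [Pi.sub_apply]
          rw [hm₁, hm₂]
          simp only []
          rw [hdec i]
          abel
        rw [this, norm_smul, Real.norm_eq_abs, abs_of_pos hθ0]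
        exact mul_le_mul_of_nonneg_left (hr2 i) (le_of_lt hθ0)
      have hMdiff : ‖M m₁ - M m₂‖ ≤ X * (2*θ) := by
        calc ‖M m₁ - M m₂‖ ≤ ‖M‖ * (Fintype.card (Fin m)) *
              (‖m₁‖ ⊔ ‖m₂‖) ^ (Fintype.card (Fin m) - 1) * ‖m₁ - m₂‖ :=
            M.norm_image_sub_le m₁ m₂
        _ ≤ ‖M‖ * m * (2*K₁) ^ (m-1) * (θ*2) := by
            rw [Fintype.card_fin]
            apply mul_le_mul
            · apply mul_le_mul_of_nonneg_left _ (by positivity)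
              apply pow_le_pow_left₀ (le_trans (norm_nonneg m₁) le_sup_left)
                (sup_le hm₁n hm₂n)
            · exact hdiffn
            · exact norm_nonneg _
            · positivity
        _ = X * (2*θ) := by rw [hX]; ring
      have hMm₂ : ‖M m₂‖ ≤ ‖A‖ * (1+ε)^m := by
        have : M m₂ = A e := by
          rw [hM]
          show S₀ (B m₂) = A e
          rw [heq e]
        rw [this]
        calc ‖A e‖ ≤ ‖A‖ * ∏ i, ‖e i‖ := A.le_opNorm e
        _ ≤ ‖A‖ * (1+ε)^m := by
            apply mul_le_mul_of_nonneg_left _ (norm_nonneg A)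
            calc ∏ i, ‖e i‖ ≤ ∏ i : Fin m, (1+ε) :=
                Finset.prod_le_prod (fun i _ => norm_nonneg _) (fun i _ => he2 i)
            _ = (1+ε)^m := by rw [Finset.prod_const, Finset.card_univ, Fintype.card_fin]
      calc ‖S₀ z‖ = ‖M m₁‖ := by rw [hMz]
      _ ≤ ‖M m₂‖ + ‖M m₁ - M m₂‖ := by
          have := norm_add_le (M m₂) (M m₁ - M m₂)
          simpa using this
      _ ≤ ‖A‖ * (1+ε)^m + δ/4 := add_le_add hMm₂ (le_trans hMdiff hθX)
    -- pass to the limit in ε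
    have hS₀z' : ‖S₀ z‖ ≤ ‖A‖ + δ/2 := by
      refine le_of_forall_pos_le_add (fun ε' hε' => ?_)
      set ε : ℝ := min 1 (ε' / ((‖A‖+1) * 3^m)) with hε
      have hεpos : 0 < ε := lt_min one_pos (by positivity)
      have hε1 : ε ≤ 1 := min_le_left _ _
      have h1 : ‖S₀ z‖ ≤ ‖A‖ * (1+ε)^m + δ/4 := hS₀z ε hεpos hε1
      have h2 : (1+ε)^m ≤ 1 + 3^m * ε := pow_one_add_le m (le_of_lt hεpos) hε1
      have h3 : ‖A‖ * 3^m * ε ≤ ε' := by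
        have hd : ε ≤ ε' / ((‖A‖+1) * 3^m) := min_le_right _ _
        have h5 : (0:ℝ) < (‖A‖+1) * 3^m := by positivity
        rw [le_div_iff₀ h5] at hd
        nlinarith [norm_nonneg A, pow_pos (show (0:ℝ) < 3 by norm_num) m, hεpos]
      calc ‖S₀ z‖ ≤ ‖A‖ * (1+ε)^m + δ/4 := h1
      _ ≤ ‖A‖ * (1 + 3^m * ε) + δ/4 := by
          apply add_le_add_left
          exact mul_le_mul_of_nonneg_left h2 (norm_nonneg A)
      _ = ‖A‖ + ‖A‖ * 3^m * ε + δ/4 := by ring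
      _ ≤ ‖A‖ + ε' + δ/4 := by linarith
      _ ≤ ‖A‖ + δ/2 + ε' := by linarith
    calc ‖Bn h‖ ≤ τ * ‖z‖ + ‖S₀ z‖ := hBnz
    _ ≤ δ/4 + (‖A‖ + δ/2) := add_le_add hτz hS₀z'
    _ ≤ ‖A‖ + δ := by linarith
  have hBnnorm : ‖Bn‖ ≤ ‖A‖ + δ :=
    opNorm_le_of_unit Bn (by positivity) hcore
  refine ⟨Y, Hi, Sy, Sh, Bn, hSymem, hShmem, hBnmem, hid, ?_, ?_, hBnnorm⟩
  · exact ContinuousLinearMap.opNorm_le_bound _ zero_le_one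
      (fun y => by rw [one_mul]; exact hSyn y)
  · intro i
    exact ContinuousLinearMap.opNorm_le_bound _ zero_le_one
      (fun e => by rw [one_mul]; exact hShn i e)

theorem ctrl (A : ContinuousMultilinearMap ℝ (fun i => (E i).carrier) F.carrier)
    (hA : A ∈ FactorableOperators E F C D N) {η δ : ℝ} (hη : 0 < η) (hδ : 0 < δ) :
    ∃ (G₀ : BanachSp.{u}) (G : Fin m → BanachSp.{u})
      (S₀ : G₀.carrier →L[ℝ] F.carrier) (S : ∀ i, (E i).carrier →L[ℝ] (G i).carrier)
      (B : ContinuousMultilinearMap ℝ (fun i => (G i).carrier) G₀.carrier),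
      S₀ ∈ D.mem G₀ ∧ (∀ i, S i ∈ (C i).mem (G i)) ∧ B ∈ N.mem G G₀ ∧
      (∀ x, A x = S₀ (B fun i => S i (x i))) ∧
      ‖S₀‖ ≤ η ∧ (∀ i, ‖S i‖ ≤ η) ∧ ‖B‖ ≤ (‖A‖ + δ) * (η ^ (m+1))⁻¹ := by
  obtain ⟨G₀, G, S₀, S, B, h₀, hS, hB, heq, hn₀, hnS, hnB⟩ := ctrl1 A hA hδ
  have hηp : (0:ℝ) < η^(m+1) := pow_pos hη _
  refine ⟨G₀, G, η • S₀, fun i => η • S i, (η^(m+1))⁻¹ • B,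
    D.smul_mem G₀ η S₀ h₀, fun i => (C i).smul_mem (G i) η (S i) (hS i),
    N.smul_mem G G₀ _ B hB, ?_, ?_, ?_, ?_⟩
  · intro x
    rw [heq x]
    simp only [ContinuousLinearMap.smul_apply, ContinuousMultilinearMap.smul_apply]
    have h1 : (fun i => η • (S i) (x i)) = fun i => η • ((fun j => S j (x j)) i) := rfl
    rw [h1, ContinuousMultilinearMap.map_smul_univ, Finset.prod_const, Finset.card_univ,
      Fintype.card_fin]
    rw [map_smul, map_smul]
    rw [smul_smul, smul_smul]
    have hsc : η * (η ^ (m + 1))⁻¹ * η ^ m = 1 := by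
      rw [pow_succ]
      field_simp
    rw [hsc, one_smul]
  · apply ContinuousLinearMap.opNorm_le_bound _ (le_of_lt hη)
    intro g
    rw [ContinuousLinearMap.smul_apply, norm_smul, Real.norm_eq_abs, abs_of_pos hη]
    calc η * ‖S₀ g‖ ≤ η * (‖S₀‖ * ‖g‖) :=
        mul_le_mul_of_nonneg_left (S₀.le_opNorm g) (le_of_lt hη)
    _ ≤ η * (1 * ‖g‖) := mul_le_mul_of_nonneg_left
        (mul_le_mul_of_nonneg_right hn₀ (norm_nonneg g)) (le_of_lt hη)
    _ = η * ‖g‖ := by ring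
  · intro i
    apply ContinuousLinearMap.opNorm_le_bound _ (le_of_lt hη)
    intro g
    rw [ContinuousLinearMap.smul_apply, norm_smul, Real.norm_eq_abs, abs_of_pos hη]
    calc η * ‖S i g‖ ≤ η * (‖S i‖ * ‖g‖) :=
        mul_le_mul_of_nonneg_left ((S i).le_opNorm g) (le_of_lt hη)
    _ ≤ η * (1 * ‖g‖) := mul_le_mul_of_nonneg_left
        (mul_le_mul_of_nonneg_right (hnS i) (norm_nonneg g)) (le_of_lt hη)
    _ = η * ‖g‖ := by ring
  · apply ContinuousMultilinearMap.opNorm_le_bound (by positivity)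
    intro v
    rw [ContinuousMultilinearMap.smul_apply, norm_smul, Real.norm_eq_abs,
      abs_of_pos (inv_pos.mpr hηp)]
    have hBv : ‖B v‖ ≤ (‖A‖+δ) * ∏ i, ‖v i‖ :=
      le_trans (B.le_opNorm v) (mul_le_mul_of_nonneg_right hnB
        (Finset.prod_nonneg (fun i _ => norm_nonneg _)))
    calc (η^(m+1))⁻¹ * ‖B v‖ ≤ (η^(m+1))⁻¹ * ((‖A‖+δ) * ∏ i, ‖v i‖) :=
        mul_le_mul_of_nonneg_left hBv (le_of_lt (inv_pos.mpr hηp))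
    _ = (‖A‖ + δ) * (η^(m+1))⁻¹ * ∏ i, ‖v i‖ := by ring


section lphelp

variable {V : ℕ → Type u} [∀ k, NormedAddCommGroup (V k)] [∀ k, NormedSpace ℝ (V k)]

/-- coordinate projection on an `ℓ∞`-sum. -/
noncomputable def lpProj (k : ℕ) : lp V ⊤ →L[ℝ] V k :=
  LinearMap.mkContinuous
    { toFun := fun f => f k
      map_add' := fun f g => by
        show (↑(f + g) : ∀ j, V j) k = _
        rw [lp.coeFn_add]
        rfl
      map_smul' := fun c f => by
        show (↑(c • f) : ∀ j, V j) k = _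
        rw [lp.coeFn_smul]
        rfl }
    1 (fun f => by
      rw [one_mul]
      exact lp.norm_apply_le_norm (by norm_num) f k)

theorem lpProj_apply (k : ℕ) (f : lp V ⊤) : lpProj k f = f k := rfl

/-- coordinate inclusion into an `ℓ∞`-sum. -/
noncomputable def lpSingle (k : ℕ) : V k →L[ℝ] lp V ⊤ :=
  LinearMap.mkContinuous
    { toFun := fun a => lp.single ⊤ k a
      map_add' := fun a b => by
        apply lp.ext
        funext j
        by_cases h : j = k
        · subst h
          rw [lp.coeFn_add]
          simp only [Pi.add_apply]
          rw [lp.single_apply_self, lp.single_apply_self, lp.single_apply_self]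
        · rw [lp.coeFn_add]
          simp only [Pi.add_apply]
          rw [lp.single_apply_ne _ _ _ h, lp.single_apply_ne _ _ _ h, lp.single_apply_ne _ _ _ h]
          simp
      map_smul' := fun c a => by
        simp only [RingHom.id_apply]
        exact lp.single_smul ⊤ k c a }
    1 (fun a => by
      rw [one_mul]
      apply lp.norm_le_of_forall_le (norm_nonneg a)
      intro j
      by_cases h : j = k
      · subst h
        show ‖lp.single ⊤ j a j‖ ≤ ‖a‖
        rw [lp.single_apply_self]
      · show ‖lp.single ⊤ k a j‖ ≤ ‖a‖
        rw [lp.single_apply_ne _ _ _ h]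
        simp [norm_nonneg])

theorem lpSingle_apply_self (k : ℕ) (a : V k) : (lpSingle k a : ∀ j, V j) k = a :=
  lp.single_apply_self ⊤ k a

theorem lpSingle_injective (k : ℕ) : Function.Injective (lpSingle (V := V) k) := by
  intro a b hab
  have := congrArg (fun f : lp V ⊤ => (f : ∀ j, V j) k) hab
  simpa [lpSingle_apply_self] using this

theorem lpProj_surjective (k : ℕ) : Function.Surjective (lpProj (V := V) k) := by
  intro a
  exact ⟨lpSingle k a, lpSingle_apply_self k a⟩

/-- coordinates of a partial sum of coordinate inclusions. -/
theorem sum_lpSingle_apply (n : ℕ) (g : ∀ k, V k) (j : ℕ) :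
    ((∑ k ∈ Finset.range n, lpSingle k (g k) : lp V ⊤) : ∀ j, V j) j
      = if j ∈ Finset.range n then g j else 0 := by
  rw [lp.coeFn_sum]
  have : ∀ k, ((lpSingle k (g k) : lp V ⊤) : ∀ j, V j) j
      = if h : j = k then (by rw [h] : V j = V k) ▸ (g k) else 0 := by
    intro k
    by_cases h : j = k
    · subst h
      simp [lpSingle_apply_self]
    · show lp.single ⊤ k (g k) j = _
      rw [lp.single_apply_ne _ _ _ h, dif_neg h]
  rw [Finset.sum_apply]
  calc (∑ k ∈ Finset.range n, ((lpSingle k (g k) : lp V ⊤) : ∀ j, V j) j)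
      = ∑ k ∈ Finset.range n, if h : j = k then (by rw [h] : V j = V k) ▸ (g k) else 0 :=
        Finset.sum_congr rfl (fun k _ => this k)
  _ = if j ∈ Finset.range n then g j else 0 := by
      rw [Finset.sum_dite_eq]

end lphelp

section summem

variable {m : ℕ}

theorem InjClass.sum_mem {Ei : Type u} [NormedAddCommGroup Ei] [NormedSpace ℝ Ei]
    [CompleteSpace Ei] (Cc : InjClass.{u} Ei) (X : BanachSp.{u}) (f : ℕ → Ei →L[ℝ] X.carrier)
    (hf : ∀ k, f k ∈ Cc.mem X) (n : ℕ) : (∑ k ∈ Finset.range n, f k) ∈ Cc.mem X := by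
  induction n with
  | zero => simpa using Cc.zero_mem X
  | succ n ih =>
    rw [Finset.sum_range_succ]
    exact Cc.add_mem X _ ih _ (hf n)

theorem SurjClass.sum_mem {Ff : Type u} [NormedAddCommGroup Ff] [NormedSpace ℝ Ff]
    [CompleteSpace Ff] (Dd : SurjClass.{u} Ff) (X : BanachSp.{u}) (f : ℕ → X.carrier →L[ℝ] Ff)
    (hf : ∀ k, f k ∈ Dd.mem X) (n : ℕ) : (∑ k ∈ Finset.range n, f k) ∈ Dd.mem X := by
  induction n with
  | zero => simpa using Dd.zero_mem X
  | succ n ih =>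
    rw [Finset.sum_range_succ]
    exact Dd.add_mem X _ ih _ (hf n)

theorem MSemiIdeal.sum_mem' (Nn : MSemiIdeal.{u} m) (G : Fin m → BanachSp.{u})
    (G₀ : BanachSp.{u}) (f : ℕ → ContinuousMultilinearMap ℝ (fun i => (G i).carrier) G₀.carrier)
    (hf : ∀ k, f k ∈ Nn.mem G G₀) (n : ℕ) : (∑ k ∈ Finset.range n, f k) ∈ Nn.mem G G₀ := by
  induction n with
  | zero => simpa using Nn.zero_mem G G₀
  | succ n ih =>
    rw [Finset.sum_range_succ]
    exact Nn.add_mem G G₀ _ ih _ (hf n)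

end summem


set_option maxHeartbeats 2000000 in
theorem series_mem (A : ContinuousMultilinearMap ℝ (fun i => (E i).carrier) F.carrier)
    (Mc : ℝ) (hMc : 0 ≤ Mc)
    (Gb₀ : ℕ → BanachSp.{u}) (Gb : ℕ → Fin m → BanachSp.{u})
    (T₀ : ∀ k, (Gb₀ k).carrier →L[ℝ] F.carrier)
    (T : ∀ k i, (E i).carrier →L[ℝ] (Gb k i).carrier)
    (Cm : ∀ k, ContinuousMultilinearMap ℝ (fun i => (Gb k i).carrier) (Gb₀ k).carrier)
    (hT₀m : ∀ k, T₀ k ∈ D.mem (Gb₀ k)) (hTm : ∀ k i, T k i ∈ (C i).mem (Gb k i))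
    (hCmm : ∀ k, Cm k ∈ N.mem (Gb k) (Gb₀ k))
    (hT₀n : ∀ k, ‖T₀ k‖ ≤ (1/2:ℝ)^k) (hTn : ∀ k i, ‖T k i‖ ≤ (1/2:ℝ)^k)
    (hCn : ∀ k, ‖Cm k‖ ≤ Mc * (1/2:ℝ)^k)
    (hsum : ∀ x : ∀ i, (E i).carrier,
      HasSum (fun k => T₀ k ((Cm k) fun i => T k i (x i))) (A x)) :
    A ∈ FactorableOperators E F C D N := by
  classical
  haveI : Fact ((1:ENNReal) ≤ ⊤) := ⟨le_top⟩
  have hhalf0 : (0:ℝ) ≤ 1/2 := by norm_num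
  have hhalf1 : (1/2:ℝ) < 1 := by norm_num
  have hpow0 : ∀ k : ℕ, (0:ℝ) ≤ (1/2:ℝ)^k := fun k => by positivity
  have hpow1 : ∀ k : ℕ, ((1/2:ℝ))^k ≤ 1 := fun k => pow_le_one₀ hhalf0 (le_of_lt hhalf1)
  have hgeo : Summable (fun k : ℕ => ((1/2:ℝ))^k) :=
    summable_geometric_of_lt_one hhalf0 hhalf1
  -- the ℓ∞-sum spaces
  let X : Fin m → BanachSp.{u} := fun i => ⟨lp (fun k => (Gb k i).carrier) ⊤⟩
  let Y : BanachSp.{u} := ⟨lp (fun k => (Gb₀ k).carrier) ⊤⟩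
  -- the diagonal operators S i
  have hTb : ∀ i (x : (E i).carrier) k, ‖T k i x‖ ≤ ((1/2:ℝ))^k * ‖x‖ := by
    intro i x k
    calc ‖T k i x‖ ≤ ‖T k i‖ * ‖x‖ := (T k i).le_opNorm x
    _ ≤ ((1/2:ℝ))^k * ‖x‖ := mul_le_mul_of_nonneg_right (hTn k i) (norm_nonneg x)
  have hTb' : ∀ i (x : (E i).carrier) k, ‖T k i x‖ ≤ ‖x‖ := by
    intro i x k
    calc ‖T k i x‖ ≤ ((1/2:ℝ))^k * ‖x‖ := hTb i x k
    _ ≤ 1 * ‖x‖ := mul_le_mul_of_nonneg_right (hpow1 k) (norm_nonneg x)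
    _ = ‖x‖ := one_mul _
  have hSmem0 : ∀ i (x : (E i).carrier), Memℓp (fun k => T k i x) ⊤ := by
    intro i x
    apply memℓp_infty
    refine ⟨‖x‖, ?_⟩
    rintro y ⟨k, rfl⟩
    exact hTb' i x k
  let S : ∀ i, (E i).carrier →L[ℝ] (X i).carrier := fun i =>
    LinearMap.mkContinuous
      { toFun := fun x =>
          (⟨fun k => T k i x, hSmem0 i x⟩ : lp (fun k => (Gb k i).carrier) ⊤)
        map_add' := fun x y => by
          apply lp.ext
          rw [lp.coeFn_add]
          funext k
          show T k i (x + y) = T k i x + T k i y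
          rw [map_add]
        map_smul' := fun c x => by
          apply lp.ext
          rw [lp.coeFn_smul]
          funext k
          show T k i (c • x) = c • T k i x
          rw [map_smul] }
      1 (fun x => by
        rw [one_mul]
        apply lp.norm_le_of_forall_le (norm_nonneg x)
        intro k
        exact hTb' i x k)
  have hSapp : ∀ i (x : (E i).carrier) k,
      ((S i x : (X i).carrier) : ∀ k, (Gb k i).carrier) k = T k i x := fun _ _ _ => rfl
  -- the summation operator S₀
  have hsummand : ∀ (y : Y.carrier) (k : ℕ),
      ‖T₀ k ((y : ∀ k, (Gb₀ k).carrier) k)‖ ≤ ((1/2:ℝ))^k * ‖y‖ := by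
    intro y k
    calc ‖T₀ k (y k)‖ ≤ ‖T₀ k‖ * ‖(y : ∀ k, (Gb₀ k).carrier) k‖ := (T₀ k).le_opNorm _
    _ ≤ ((1/2:ℝ))^k * ‖y‖ := mul_le_mul (hT₀n k)
        (lp.norm_apply_le_norm (by norm_num) y k) (norm_nonneg _) (hpow0 k)
  have hsn : ∀ y : Y.carrier, Summable (fun k => ‖T₀ k ((y : ∀ k, (Gb₀ k).carrier) k)‖) := by
    intro y
    apply Summable.of_nonneg_of_le (fun k => norm_nonneg _) (hsummand y)
    exact hgeo.mul_right _
  have hsummable : ∀ y : Y.carrier, Summable (fun k => T₀ k ((y : ∀ k, (Gb₀ k).carrier) k)) :=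
    fun y => (hsn y).of_norm
  let S₀ : Y.carrier →L[ℝ] F.carrier :=
    LinearMap.mkContinuous
      { toFun := fun y => ∑' k, T₀ k ((y : ∀ k, (Gb₀ k).carrier) k)
        map_add' := fun y z => by
          have h1 : (fun k => T₀ k (((y + z : Y.carrier) : ∀ k, (Gb₀ k).carrier) k))
              = fun k => T₀ k ((y : ∀ k, (Gb₀ k).carrier) k)
                  + T₀ k ((z : ∀ k, (Gb₀ k).carrier) k) := by
            funext k
            rw [lp.coeFn_add]
            simp only [Pi.add_apply]
            rw [map_add]
          show (∑' k, T₀ k (((y + z : Y.carrier) : ∀ k, (Gb₀ k).carrier) k)) = _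
          rw [h1]
          exact Summable.tsum_add (hsummable y) (hsummable z)
        map_smul' := fun c y => by
          simp only [RingHom.id_apply]
          have h1 : (fun k => T₀ k (((c • y : Y.carrier) : ∀ k, (Gb₀ k).carrier) k))
              = fun k => c • T₀ k ((y : ∀ k, (Gb₀ k).carrier) k) := by
            funext k
            rw [lp.coeFn_smul]
            simp only [Pi.smul_apply]
            rw [map_smul]
          show (∑' k, T₀ k (((c • y : Y.carrier) : ∀ k, (Gb₀ k).carrier) k)) = _
          rw [h1]
          exact ((hsummable y).hasSum.const_smul c).tsum_eq }
      2 (fun y => by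
        calc ‖∑' k, T₀ k ((y : ∀ k, (Gb₀ k).carrier) k)‖
            ≤ ∑' k, ‖T₀ k ((y : ∀ k, (Gb₀ k).carrier) k)‖ := norm_tsum_le_tsum_norm (hsn y)
        _ ≤ ∑' k, ((1/2:ℝ))^k * ‖y‖ := Summable.tsum_le_tsum (hsummand y) (hsn y) (hgeo.mul_right _)
        _ = (∑' k : ℕ, ((1/2:ℝ))^k) * ‖y‖ := tsum_mul_right
        _ = 2 * ‖y‖ := by
            rw [tsum_geometric_of_lt_one hhalf0 hhalf1]
            norm_num)
  have hS₀app : ∀ y : Y.carrier,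
      S₀ y = ∑' k, T₀ k ((y : ∀ k, (Gb₀ k).carrier) k) := fun _ => rfl
  -- the diagonal multilinear operator B
  have hCb : ∀ (k : ℕ) (x : ∀ i, (X i).carrier),
      ‖Cm k (fun i => ((x i : (X i).carrier) : ∀ k, (Gb k i).carrier) k)‖
        ≤ (Mc * ((1/2:ℝ))^k) * ∏ i, ‖x i‖ := by
    intro k x
    calc ‖Cm k (fun i => ((x i : (X i).carrier) : ∀ k, (Gb k i).carrier) k)‖
        ≤ ‖Cm k‖ * ∏ i, ‖((x i : (X i).carrier) : ∀ k, (Gb k i).carrier) k‖ :=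
          (Cm k).le_opNorm _
    _ ≤ (Mc * ((1/2:ℝ))^k) * ∏ i, ‖x i‖ := by
        apply mul_le_mul (hCn k) _ (Finset.prod_nonneg (fun i _ => norm_nonneg _))
          (by positivity)
        exact Finset.prod_le_prod (fun i _ => norm_nonneg _)
          (fun i _ => lp.norm_apply_le_norm (by norm_num) (x i) k)
  have hCb' : ∀ (k : ℕ) (x : ∀ i, (X i).carrier),
      ‖Cm k (fun i => ((x i : (X i).carrier) : ∀ k, (Gb k i).carrier) k)‖
        ≤ Mc * ∏ i, ‖x i‖ := by
    intro k x
    calc ‖Cm k (fun i => ((x i : (X i).carrier) : ∀ k, (Gb k i).carrier) k)‖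
        ≤ (Mc * ((1/2:ℝ))^k) * ∏ i, ‖x i‖ := hCb k x
    _ ≤ (Mc * 1) * ∏ i, ‖x i‖ := by
        apply mul_le_mul_of_nonneg_right _ (Finset.prod_nonneg (fun i _ => norm_nonneg _))
        exact mul_le_mul_of_nonneg_left (hpow1 k) hMc
    _ = Mc * ∏ i, ‖x i‖ := by rw [mul_one]
  have hBmem0 : ∀ x : ∀ i, (X i).carrier,
      Memℓp (fun k => Cm k (fun i => ((x i : (X i).carrier) : ∀ k, (Gb k i).carrier) k)) ⊤ := by
    intro x
    apply memℓp_infty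
    refine ⟨Mc * ∏ i, ‖x i‖, ?_⟩
    rintro y ⟨k, rfl⟩
    exact hCb' k x
  let Bmul : MultilinearMap ℝ (fun i => (X i).carrier) Y.carrier :=
    { toFun := fun x =>
        (⟨fun k => Cm k (fun i => ((x i : (X i).carrier) : ∀ k, (Gb k i).carrier) k),
          hBmem0 x⟩ : lp (fun k => (Gb₀ k).carrier) ⊤)
      map_update_add' := by
        intro dec x i a b
        apply lp.ext
        rw [lp.coeFn_add]
        funext k
        show Cm k _ = Cm k _ + Cm k _
        have e2 : ∀ (v : (X i).carrier) (k : ℕ),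
            (fun j => ((Function.update x i v j : (X j).carrier) : ∀ k, (Gb k j).carrier) k)
              = Function.update
                  (fun j => ((x j : (X j).carrier) : ∀ k, (Gb k j).carrier) k) i
                  ((v : ∀ k, (Gb k i).carrier) k) := by
          intro v k
          funext j
          exact Function.apply_update
            (fun j (y : (X j).carrier) => ((y : (X j).carrier) : ∀ k, (Gb k j).carrier) k)
            x i v j
        rw [e2 (a + b) k, e2 a k, e2 b k, lp.coeFn_add]
        simp only [Pi.add_apply]
        rw [ContinuousMultilinearMap.map_update_add]
      map_update_smul' := by
        intro dec x i c a
        apply lp.ext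
        rw [lp.coeFn_smul]
        funext k
        show Cm k _ = c • Cm k _
        have e2 : ∀ (v : (X i).carrier) (k : ℕ),
            (fun j => ((Function.update x i v j : (X j).carrier) : ∀ k, (Gb k j).carrier) k)
              = Function.update
                  (fun j => ((x j : (X j).carrier) : ∀ k, (Gb k j).carrier) k) i
                  ((v : ∀ k, (Gb k i).carrier) k) := by
          intro v k
          funext j
          exact Function.apply_update
            (fun j (y : (X j).carrier) => ((y : (X j).carrier) : ∀ k, (Gb k j).carrier) k)
            x i v j
        rw [e2 (c • a) k, e2 a k, lp.coeFn_smul]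
        simp only [Pi.smul_apply]
        rw [ContinuousMultilinearMap.map_update_smul] }
  let B : ContinuousMultilinearMap ℝ (fun i => (X i).carrier) Y.carrier :=
    Bmul.mkContinuous Mc (fun x => by
      show ‖(⟨_, hBmem0 x⟩ : lp (fun k => (Gb₀ k).carrier) ⊤)‖ ≤ Mc * ∏ i, ‖x i‖
      apply lp.norm_le_of_forall_le
        (mul_nonneg hMc (Finset.prod_nonneg (fun i _ => norm_nonneg _)))
      intro k
      exact hCb' k x)
  have hBapp : ∀ (x : ∀ i, (X i).carrier) (k : ℕ),
      ((B x : Y.carrier) : ∀ k, (Gb₀ k).carrier) k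
        = Cm k (fun i => ((x i : (X i).carrier) : ∀ k, (Gb k i).carrier) k) := fun _ _ => rfl
  -- membership of S i
  have hSmem : ∀ i, S i ∈ (C i).mem (X i) := by
    intro i
    set P : ℕ → (E i).carrier →L[ℝ] (X i).carrier :=
      fun n => ∑ k ∈ Finset.range n, (lpSingle k).comp (T k i) with hP
    have hPmem : ∀ n, P n ∈ (C i).mem (X i) := by
      intro n
      apply (C i).sum_mem
      intro k
      exact (C i).comp_inj (Gb k i) (X i) (T k i) (hTm k i) (lpSingle (V := fun k => (Gb k i).carrier) k)
        (lpSingle_injective (V := fun k => (Gb k i).carrier) k)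
    have hPdiff : ∀ n, ‖S i - P n‖ ≤ ((1/2:ℝ))^n := by
      intro n
      apply ContinuousLinearMap.opNorm_le_bound _ (hpow0 n)
      intro x
      rw [ContinuousLinearMap.sub_apply]
      apply lp.norm_le_of_forall_le (by positivity)
      intro j
      have h1 : ((S i x - P n x : (X i).carrier) : ∀ k, (Gb k i).carrier) j
          = T j i x - (if j ∈ Finset.range n then T j i x else 0) := by
        rw [lp.coeFn_sub]
        simp only [Pi.sub_apply]
        congr 1
        have h2 : P n x = ∑ k ∈ Finset.range n, lpSingle k (T k i x) := by
          rw [hP, ContinuousLinearMap.sum_apply]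
          rfl
        rw [h2]
        exact sum_lpSingle_apply n (fun k => T k i x) j
      rw [h1]
      by_cases hj : j ∈ Finset.range n
      · rw [if_pos hj, sub_self]
        simp only [norm_zero]
        positivity
      · rw [if_neg hj, sub_zero]
        have hjn : n ≤ j := by
          by_contra hc
          exact hj (Finset.mem_range.mpr (lt_of_not_ge hc))
        calc ‖T j i x‖ ≤ ((1/2:ℝ))^j * ‖x‖ := hTb i x j
        _ ≤ ((1/2:ℝ))^n * ‖x‖ := mul_le_mul_of_nonneg_right
            (pow_le_pow_of_le_one hhalf0 (le_of_lt hhalf1) hjn) (norm_nonneg x)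
    have ht := tendsto_of_geom (S i) P 1 (fun n => by rw [one_mul]; exact hPdiff n)
    exact ((C i).isClosed (X i)).mem_of_tendsto ht (Filter.Eventually.of_forall hPmem)
  -- membership of S₀
  have hS₀mem : S₀ ∈ D.mem Y := by
    set Q : ℕ → Y.carrier →L[ℝ] F.carrier :=
      fun n => ∑ k ∈ Finset.range n, (T₀ k).comp (lpProj k) with hQ
    have hQmem : ∀ n, Q n ∈ D.mem Y := by
      intro n
      apply D.sum_mem
      intro k
      exact D.comp_surj (Gb₀ k) Y (T₀ k) (hT₀m k) (lpProj k) (lpProj_surjective k)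
    have hQdiff : ∀ n, ‖S₀ - Q n‖ ≤ 2 * ((1/2:ℝ))^n := by
      intro n
      apply ContinuousLinearMap.opNorm_le_bound _ (by positivity)
      intro y
      rw [ContinuousLinearMap.sub_apply]
      have h2 : Q n y = ∑ k ∈ Finset.range n, T₀ k ((y : ∀ k, (Gb₀ k).carrier) k) := by
        rw [hQ, ContinuousLinearMap.sum_apply]
        rfl
      have h3 : S₀ y - Q n y = ∑' k : ℕ, T₀ (k + n) ((y : ∀ k, (Gb₀ k).carrier) (k + n)) := by
        rw [hS₀app, h2, eq_comm, eq_sub_iff_add_eq, add_comm]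
        exact Summable.sum_add_tsum_nat_add n (hsummable y)
      rw [h3]
      have h4 : Summable (fun k : ℕ => ‖T₀ (k + n) ((y : ∀ k, (Gb₀ k).carrier) (k + n))‖) :=
        (summable_nat_add_iff n).mpr (hsn y)
      calc ‖∑' k : ℕ, T₀ (k + n) ((y : ∀ k, (Gb₀ k).carrier) (k + n))‖
          ≤ ∑' k : ℕ, ‖T₀ (k + n) ((y : ∀ k, (Gb₀ k).carrier) (k + n))‖ := by
            exact norm_tsum_le_tsum_norm h4
      _ ≤ ∑' k : ℕ, ((1/2:ℝ))^(k+n) * ‖y‖ := Summable.tsum_le_tsum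
            (fun k => hsummand y (k+n)) h4
            (by
              have : (fun k : ℕ => ((1/2:ℝ))^(k+n) * ‖y‖)
                  = fun k : ℕ => (((1/2:ℝ))^n * ‖y‖) * ((1/2:ℝ))^k := by
                funext k
                rw [pow_add]
                ring
              rw [this]
              exact hgeo.mul_left _)
      _ = (((1/2:ℝ))^n * ‖y‖) * ∑' k : ℕ, ((1/2:ℝ))^k := by
          rw [← tsum_mul_left]
          apply tsum_congr
          intro k
          rw [pow_add]
          ring
      _ = 2 * ((1/2:ℝ))^n * ‖y‖ := by
          rw [tsum_geometric_of_lt_one hhalf0 hhalf1]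
          ring
    have ht := tendsto_of_geom S₀ Q 2 hQdiff
    exact (D.isClosed Y).mem_of_tendsto ht (Filter.Eventually.of_forall hQmem)
  -- membership of B
  have hBmem : B ∈ N.mem X Y := by
    set R : ℕ → ContinuousMultilinearMap ℝ (fun i => (X i).carrier) Y.carrier :=
      fun n => ∑ k ∈ Finset.range n,
        (lpSingle k).compContinuousMultilinearMap
          ((Cm k).compContinuousLinearMap (fun i => lpProj k)) with hR
    have hRmem : ∀ n, R n ∈ N.mem X Y := by
      intro n
      apply N.sum_mem'
      intro k
      exact N.comp_mem (Gb k) (Gb₀ k) (Cm k) (hCmm k) X Y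
        (fun i => lpProj (V := fun k => (Gb k i).carrier) k)
        (fun i => lpProj_surjective (V := fun k => (Gb k i).carrier) k)
        (lpSingle (V := fun k => (Gb₀ k).carrier) k)
        (lpSingle_injective (V := fun k => (Gb₀ k).carrier) k)
    have hRdiff : ∀ n, ‖B - R n‖ ≤ Mc * ((1/2:ℝ))^n := by
      intro n
      apply ContinuousMultilinearMap.opNorm_le_bound (by positivity)
      intro x
      rw [ContinuousMultilinearMap.sub_apply]
      apply lp.norm_le_of_forall_le (by positivity)
      intro j
      have h2 : R n x = ∑ k ∈ Finset.range n,
          lpSingle k (Cm k (fun i => ((x i : (X i).carrier) : ∀ k, (Gb k i).carrier) k)) := by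
        rw [hR, ContinuousMultilinearMap.sum_apply]
        rfl
      have h1 : ((B x - R n x : Y.carrier) : ∀ k, (Gb₀ k).carrier) j
          = Cm j (fun i => ((x i : (X i).carrier) : ∀ k, (Gb k i).carrier) j)
            - (if j ∈ Finset.range n
                then Cm j (fun i => ((x i : (X i).carrier) : ∀ k, (Gb k i).carrier) j)
                else 0) := by
        rw [lp.coeFn_sub]
        simp only [Pi.sub_apply]
        congr 1
        rw [h2]
        exact sum_lpSingle_apply n
          (fun k => Cm k (fun i => ((x i : (X i).carrier) : ∀ k, (Gb k i).carrier) k)) j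
      rw [h1]
      by_cases hj : j ∈ Finset.range n
      · rw [if_pos hj, sub_self]
        simp only [norm_zero]
        positivity
      · rw [if_neg hj, sub_zero]
        have hjn : n ≤ j := by
          by_contra hc
          exact hj (Finset.mem_range.mpr (lt_of_not_ge hc))
        calc ‖Cm j (fun i => ((x i : (X i).carrier) : ∀ k, (Gb k i).carrier) j)‖
            ≤ (Mc * ((1/2:ℝ))^j) * ∏ i, ‖x i‖ := hCb j x
        _ ≤ (Mc * ((1/2:ℝ))^n) * ∏ i, ‖x i‖ := by
            apply mul_le_mul_of_nonneg_right _
              (Finset.prod_nonneg (fun i _ => norm_nonneg _))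
            exact mul_le_mul_of_nonneg_left
              (pow_le_pow_of_le_one hhalf0 (le_of_lt hhalf1) hjn) hMc
        _ = Mc * ((1/2:ℝ))^n * ∏ i, ‖x i‖ := rfl
    have ht := tendsto_of_geom B R Mc hRdiff
    exact (N.isClosed X Y).mem_of_tendsto ht (Filter.Eventually.of_forall hRmem)
  -- the factorization identity
  refine ⟨Y, X, S₀, S, B, hS₀mem, hSmem, hBmem, ?_⟩
  intro x
  rw [hS₀app]
  have h1 : (fun k => T₀ k (((B fun i => S i (x i) : Y.carrier) : ∀ k, (Gb₀ k).carrier) k))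
      = fun k => T₀ k ((Cm k) fun i => T k i (x i)) := by
    funext k
    congr 1
  rw [h1]
  exact ((hsum x).tsum_eq).symm


end Aux
/-- `D(F) ∘ N ∘ (C(E₁),…,C(E_m))` is a closed linear subspace of `L(E₁,…,E_m;F)`. -/
theorem stmt18 {m : ℕ} (E : Fin m → BanachSp.{u}) (F : BanachSp.{u})
    (C : ∀ i, InjClass.{u} (E i).carrier) (D : SurjClass.{u} F.carrier)
    (N : MSemiIdeal.{u} m) :
    IsClosed (FactorableOperators E F C D N) ∧
      (0 : ContinuousMultilinearMap ℝ (fun i => (E i).carrier) F.carrier) ∈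
        FactorableOperators E F C D N ∧
      (∀ A₁ ∈ FactorableOperators E F C D N, ∀ A₂ ∈ FactorableOperators E F C D N,
        A₁ + A₂ ∈ FactorableOperators E F C D N) ∧
      (∀ (c : ℝ), ∀ A ∈ FactorableOperators E F C D N,
        c • A ∈ FactorableOperators E F C D N) := by
  refine ⟨?_, factorable_zero, fun A₁ h₁ A₂ h₂ => factorable_add A₁ A₂ h₁ h₂,
    fun c A hA => factorable_smul c A hA⟩
  refine isClosed_of_closure_subset ?_
  intro A hA
  have hhalf0 : (0:ℝ) ≤ 1/2 := by norm_num
  have hhalf1 : (1/2:ℝ) < 1 := by norm_num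
  set ε : ℕ → ℝ := fun k => (1/2 : ℝ)^((k+1)*(m+2)) with hε
  have hεpos : ∀ k, 0 < ε k := fun k => by positivity
  have hεsmall : ∀ k, ε k ≤ (1/2:ℝ)^(k+1) := by
    intro k
    apply pow_le_pow_of_le_one hhalf0 (le_of_lt hhalf1)
    exact Nat.le_mul_of_pos_right _ (by omega)
  have hεmono : ∀ k, ε (k+1) ≤ ε k := by
    intro k
    apply pow_le_pow_of_le_one hhalf0 (le_of_lt hhalf1)
    exact Nat.mul_le_mul_right _ (by omega)
  have hWex : ∀ k : ℕ, ∃ W ∈ FactorableOperators E F C D N, dist A W < ε k :=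
    fun k => Metric.mem_closure_iff.mp hA (ε k) (hεpos k)
  choose W hWmem hWd using hWex
  have hWn : ∀ k, ‖A - W k‖ < ε k := by
    intro k
    rw [← dist_eq_norm]
    exact hWd k
  set Dk : ℕ → ContinuousMultilinearMap ℝ (fun i => (E i).carrier) F.carrier :=
    fun k => Nat.casesOn k (W 0) (fun j => W (j+1) - W j) with hDk
  have hDmem : ∀ k, Dk k ∈ FactorableOperators E F C D N := by
    intro k
    cases k with
    | zero => exact hWmem 0
    | succ j => exact factorable_sub _ _ (hWmem (j+1)) (hWmem j)
  have hDnorm0 : ‖Dk 0‖ ≤ ‖A‖ + 1 := by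
    have h1 : (Dk 0) = A - (A - W 0) := by
      show W 0 = A - (A - W 0)
      abel
    rw [h1]
    calc ‖A - (A - W 0)‖ ≤ ‖A‖ + ‖A - W 0‖ := norm_sub_le _ _
    _ ≤ ‖A‖ + 1 := by
        have h2 := hWn 0
        have h3 : ε 0 ≤ 1 := le_trans (hεsmall 0) (by norm_num [hhalf0])
        linarith
  have hDnormk : ∀ j, ‖Dk (j+1)‖ ≤ 2 * ε j := by
    intro j
    have h1 : Dk (j+1) = (A - W j) - (A - W (j+1)) := by
      show W (j+1) - W j = _
      abel
    rw [h1]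
    calc ‖(A - W j) - (A - W (j+1))‖ ≤ ‖A - W j‖ + ‖A - W (j+1)‖ := norm_sub_le _ _
    _ ≤ 2 * ε j := by
        have h2 := hWn j
        have h3 := hWn (j+1)
        have h4 := hεmono j
        linarith
  have hctrlex : ∀ k, ∃ (G₀ : BanachSp.{u}) (G : Fin m → BanachSp.{u})
      (S₀ : G₀.carrier →L[ℝ] F.carrier) (S : ∀ i, (E i).carrier →L[ℝ] (G i).carrier)
      (B : ContinuousMultilinearMap ℝ (fun i => (G i).carrier) G₀.carrier),
      S₀ ∈ D.mem G₀ ∧ (∀ i, S i ∈ (C i).mem (G i)) ∧ B ∈ N.mem G G₀ ∧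
      (∀ x, (Dk k) x = S₀ (B fun i => S i (x i))) ∧
      ‖S₀‖ ≤ (1/2:ℝ)^k ∧ (∀ i, ‖S i‖ ≤ (1/2:ℝ)^k) ∧
      ‖B‖ ≤ (‖Dk k‖ + (1/2:ℝ)^(k*(m+2))) * (((1/2:ℝ)^k) ^ (m+1))⁻¹ :=
    fun k => ctrl (Dk k) (hDmem k) (by positivity) (by positivity)
  choose Gb₀ Gb T₀ T Cm hm₀ hmS hmB heqk hn₀ hnS hnB using hctrlex
  set Mc : ℝ := ‖A‖ + 5 with hMc
  have hMc0 : (0:ℝ) ≤ Mc := by positivity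
  have hpowsplit : ∀ K : ℕ, ((1/2:ℝ))^(K*(m+2)) = ((1/2:ℝ))^(K*(m+1)) * ((1/2:ℝ))^K := by
    intro K
    rw [← pow_add]
    congr 1
  have hpowinv : ∀ K : ℕ, ((((1/2:ℝ))^K) ^ (m+1))⁻¹ = (((1/2:ℝ))^(K*(m+1)))⁻¹ := by
    intro K
    rw [← pow_mul]
  have hCb : ∀ k, ‖Cm k‖ ≤ Mc * (1/2:ℝ)^k := by
    intro k
    have hkm : (0:ℝ) < ((1/2:ℝ))^(k*(m+1)) := by positivity
    have h1 := hnB k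
    rw [hpowinv k] at h1
    cases k with
    | zero =>
      simp only [Nat.zero_mul, pow_zero, inv_one, mul_one] at h1 ⊢
      calc ‖Cm 0‖ ≤ ‖Dk 0‖ + 1 := h1
      _ ≤ Mc := by
          rw [hMc]
          linarith [hDnorm0]
    | succ j =>
      have h2 : ‖Dk (j+1)‖ ≤ 2 * ((1/2:ℝ))^((j+1)*(m+2)) := hDnormk j
      have h3 : ‖Dk (j+1)‖ + ((1/2:ℝ))^((j+1)*(m+2)) ≤ 3 * ((1/2:ℝ))^((j+1)*(m+2)) := by
        linarith
      calc ‖Cm (j+1)‖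
          ≤ (‖Dk (j+1)‖ + ((1/2:ℝ))^((j+1)*(m+2))) * (((1/2:ℝ))^((j+1)*(m+1)))⁻¹ := h1
      _ ≤ (3 * ((1/2:ℝ))^((j+1)*(m+2))) * (((1/2:ℝ))^((j+1)*(m+1)))⁻¹ := by
          apply mul_le_mul_of_nonneg_right h3 (le_of_lt (inv_pos.mpr (by positivity)))
      _ = 3 * ((1/2:ℝ))^(j+1) := by
          rw [hpowsplit (j+1)]
          field_simp
      _ ≤ Mc * ((1/2:ℝ))^(j+1) := by
          apply mul_le_mul_of_nonneg_right _ (by positivity)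
          rw [hMc]
          linarith [norm_nonneg A]
  have hDn : ∀ k, ‖Dk k‖ ≤ (‖A‖ + 2) * (1/2:ℝ)^k := by
    intro k
    cases k with
    | zero =>
      simp only [pow_zero, mul_one]
      linarith [hDnorm0]
    | succ j =>
      calc ‖Dk (j+1)‖ ≤ 2 * ε j := hDnormk j
      _ ≤ 2 * ((1/2:ℝ))^(j+1) := by
          have := hεsmall j
          nlinarith [hεpos j]
      _ ≤ (‖A‖ + 2) * ((1/2:ℝ))^(j+1) := by
          apply mul_le_mul_of_nonneg_right _ (by positivity)
          linarith [norm_nonneg A]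
  have hsum : ∀ x : ∀ i, (E i).carrier,
      HasSum (fun k => T₀ k ((Cm k) fun i => T k i (x i))) (A x) := by
    intro x
    have h1 : (fun k => T₀ k ((Cm k) fun i => T k i (x i))) = fun k => (Dk k) x := by
      funext k
      exact (heqk k x).symm
    rw [h1]
    have hsumm : Summable (fun k => (Dk k) x) := by
      apply Summable.of_norm_bounded (g := fun k => ((‖A‖ + 2) * ∏ i, ‖x i‖) * (1/2:ℝ)^k)
      · exact (summable_geometric_of_lt_one hhalf0 hhalf1).mul_left _
      · intro k
        calc ‖(Dk k) x‖ ≤ ‖Dk k‖ * ∏ i, ‖x i‖ := (Dk k).le_opNorm x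
        _ ≤ ((‖A‖ + 2) * (1/2:ℝ)^k) * ∏ i, ‖x i‖ := by
            apply mul_le_mul_of_nonneg_right (hDn k)
              (Finset.prod_nonneg (fun i _ => norm_nonneg _))
        _ = ((‖A‖ + 2) * ∏ i, ‖x i‖) * (1/2:ℝ)^k := by ring
    rw [hsumm.hasSum_iff_tendsto_nat]
    have htel : ∀ n, ∑ k ∈ Finset.range (n+1), (Dk k) x = (W n) x := by
      intro n
      induction n with
      | zero => simp [hDk]
      | succ j ih =>
        rw [Finset.sum_range_succ, ih]
        show (W j) x + (W (j+1) - W j) x = (W (j+1)) x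
        rw [ContinuousMultilinearMap.sub_apply]
        abel
    have hWx : Filter.Tendsto (fun n => (W n) x) Filter.atTop (𝓝 (A x)) := by
      apply tendsto_of_geom (A x) (fun n => (W n) x) (∏ i, ‖x i‖)
      intro n
      have h2 : A x - (W n) x = (A - W n) x := by
        rw [ContinuousMultilinearMap.sub_apply]
      rw [h2]
      calc ‖(A - W n) x‖ ≤ ‖A - W n‖ * ∏ i, ‖x i‖ := (A - W n).le_opNorm x
      _ ≤ (1/2:ℝ)^n * ∏ i, ‖x i‖ := by
          apply mul_le_mul_of_nonneg_right _ (Finset.prod_nonneg (fun i _ => norm_nonneg _))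
          have h3 := hWn n
          have h4 : ε n ≤ (1/2:ℝ)^n := by
            calc ε n ≤ (1/2:ℝ)^(n+1) := hεsmall n
            _ ≤ (1/2:ℝ)^n := pow_le_pow_of_le_one hhalf0 (le_of_lt hhalf1) (by omega)
          linarith
      _ = (∏ i, ‖x i‖) * (1/2:ℝ)^n := by ring
    have hshift : Filter.Tendsto (fun n => ∑ k ∈ Finset.range (n+1), (Dk k) x)
        Filter.atTop (𝓝 (A x)) := by
      rw [show (fun n => ∑ k ∈ Finset.range (n+1), (Dk k) x) = fun n => (W n) x
        from funext htel]
      exact hWx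
    exact (Filter.tendsto_add_atTop_iff_nat 1).mp hshift
  exact series_mem A Mc hMc0 Gb₀ Gb T₀ T Cm hm₀ hmS hmB hn₀ hnS hCb hsum
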